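/- Let d, d' be real numbers with d' ≠ 0 and d/|d'| = ℓ + p/q with ℓ ∈ ℤ, p ∈ ℕ, q ∈ ℕ, p < q, gcd(p,q) = 1 (and q = 1 if p = 0). Then for any x ∈ ℝ, the set { (x + d·n) mod |d'| : n ∈ ℤ } has exactly q elements. -/

import Mathlib

/-- The representative of `x` modulo `|y|` lying in `[0, |y|)` (for `y ≠ 0`). -/
noncomputable def modRep (y x : ℝ) : ℝ := x - |y| * (⌊x / |y|⌋ : ℤ)

theorem orbit_card_eq_denominator (d d' : ℝ) (hd' : d' ≠ 0) (ℓ : ℤ) (p q : ℕ)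
    (hq : 0 < q) (hfrac : d / |d'| = (ℓ : ℝ) + (p : ℝ) / (q : ℝ))
    (hpq : p < q) (hcop : Nat.Coprime p q) (hp0 : p = 0 → q = 1) (x : ℝ) :
    ({r : ℝ | ∃ n : ℤ, r = modRep d' (x + d * n)}).ncard = q := by
  haveI : NeZero q := ⟨hq.ne'⟩
  have hD : (0:ℝ) < |d'| := abs_pos.mpr hd'
  have hqR : (0:ℝ) < (q:ℝ) := Nat.cast_pos.mpr hq
  set t := x / |d'| with ht
  set f : ℕ → ℝ := fun k => |d'| * Int.fract (t + (k:ℝ) / q) with hf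
  have hdval : d = |d'| * ((ℓ:ℝ) + (p:ℝ) / q) := by
    rw [div_eq_iff hD.ne'] at hfrac
    linarith [hfrac]
  -- modRep as fract
  have hmod : ∀ z : ℝ, modRep d' z = |d'| * Int.fract (z / |d'|) := by
    intro z
    unfold modRep Int.fract
    rw [mul_sub, mul_div_cancel₀ _ hD.ne']
  -- key computation
  have key : ∀ n : ℤ, modRep d' (x + d * n)
      = |d'| * Int.fract (t + ((n * (p:ℤ) % (q:ℤ) : ℤ) : ℝ) / q) := by
    intro n
    rw [hmod]
    congr 1
    have hdiv : n * (p:ℤ) % (q:ℤ) + (q:ℤ) * (n * (p:ℤ) / (q:ℤ)) = n * (p:ℤ) :=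
      Int.emod_add_mul_ediv _ _
    have hR : ((n * (p:ℤ) % (q:ℤ) : ℤ) : ℝ) + (q:ℝ) * ((n * (p:ℤ) / (q:ℤ) : ℤ) : ℝ)
        = (n:ℝ) * (p:ℝ) := by exact_mod_cast congrArg (fun z : ℤ => (z:ℝ)) hdiv
    have h1 : (x + d * n) / |d'| =
        (t + ((n * (p:ℤ) % (q:ℤ) : ℤ) : ℝ) / q) + ((n * ℓ + n * (p:ℤ) / (q:ℤ) : ℤ) : ℝ) := by
      rw [hdval, ht]
      push_cast
      field_simp
      linear_combination (-|d'|) * hR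
    rw [h1, Int.fract_add_intCast]
  -- the set equals the image of range q
  have hset : {r : ℝ | ∃ n : ℤ, r = modRep d' (x + d * n)} = f '' ↑(Finset.range q) := by
    ext r
    simp only [Set.mem_setOf_eq, Set.mem_image, Finset.coe_range, Set.mem_Iio]
    constructor
    · rintro ⟨n, rfl⟩
      refine ⟨(n * (p:ℤ) % (q:ℤ)).toNat, ?_, ?_⟩
      · have h2 : n * (p:ℤ) % (q:ℤ) < (q:ℤ) := Int.emod_lt_of_pos _ (by exact_mod_cast hq)
        omega
      · have h0 : (0:ℤ) ≤ n * (p:ℤ) % (q:ℤ) := Int.emod_nonneg _ (by exact_mod_cast hq.ne')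
        have hcast : (((n * (p:ℤ) % (q:ℤ)).toNat : ℕ) : ℝ) = ((n * (p:ℤ) % (q:ℤ) : ℤ) : ℝ) := by
          exact_mod_cast congrArg (fun z : ℤ => (z:ℝ)) (Int.toNat_of_nonneg h0)
        rw [key n, hf]
        simp only
        rw [hcast]
    · rintro ⟨k, hk, rfl⟩
      -- find n with n * p % q = k
      obtain ⟨n, hn⟩ : ∃ n : ℤ, n * (p:ℤ) % (q:ℤ) = (k:ℤ) := by
        set u : (ZMod q)ˣ := ZMod.unitOfCoprime p hcop with hu
        set m : ZMod q := (k : ZMod q) * (↑u⁻¹ : ZMod q) with hm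
        refine ⟨(m.val : ℤ), ?_⟩
        have hmp : m * (p : ZMod q) = (k : ZMod q) := by
          rw [hm, mul_assoc, ← ZMod.coe_unitOfCoprime p hcop, ← hu, Units.inv_mul, mul_one]
        have hcast : (((m.val : ℤ) * (p:ℤ) : ℤ) : ZMod q) = (((k:ℤ) : ℤ) : ZMod q) := by
          push_cast
          rw [ZMod.natCast_val, ZMod.cast_id]
          exact hmp
        have hmodeq : (m.val : ℤ) * (p:ℤ) ≡ (k:ℤ) [ZMOD (q:ℕ)] :=
          (ZMod.intCast_eq_intCast_iff _ _ _).mp hcast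
        rw [Int.ModEq] at hmodeq
        rw [hmodeq, Int.emod_eq_of_lt (by positivity) (by exact_mod_cast hk)]
      refine ⟨n, ?_⟩
      rw [key n, hn, hf]
      norm_num
  have hinj : Set.InjOn f ↑(Finset.range q) := by
    intro a ha b hb hab
    simp only [Finset.coe_range, Set.mem_Iio] at ha hb
    rw [hf] at hab
    simp only [mul_eq_mul_left_iff] at hab
    rcases hab with hab | hD0
    · obtain ⟨z, hz⟩ := Int.fract_eq_fract.mp hab
      have hz' : (a:ℝ) - (b:ℝ) = (z:ℝ) * q := by
        have h3 : (a:ℝ)/q - (b:ℝ)/q = z := by linarith [hz]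
        field_simp at h3
        linarith [h3]
      have hzZ : (a:ℤ) - (b:ℤ) = z * q := by exact_mod_cast hz'
      have haq : (a:ℤ) < q := by exact_mod_cast ha
      have hbq : (b:ℤ) < q := by exact_mod_cast hb
      have hz0 : z = 0 := by nlinarith [Int.ofNat_nonneg a, Int.ofNat_nonneg b]
      rw [hz0, zero_mul] at hzZ
      omega
    · exact absurd hD0 hD.ne'
  rw [hset, Set.ncard_image_of_injOn hinj, Set.ncard_coe_finset, Finset.card_range]
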